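/- The direct product of finitely many finitely separable rings is finitely separable. -/

import Mathlib

/-- A (not necessarily unital) ring `K` is finitely separable if every element `a`
lying outside a subring `A` can be separated from `A` by a homomorphism to a finite ring. -/
def IsFinSep (K : Type) [NonUnitalRing K] : Prop :=
  ∀ (a : K) (A : NonUnitalSubring K), a ∉ A →
    ∃ (F : Type) (_ : NonUnitalRing F) (_ : Finite F),
      ∃ φ : K →ₙ+* F, φ a ∉ ⇑φ '' (A : Set K)

/-- `ppow a n = a ^ (n + 1)`, the positive powers of `a` in a non-unital ring. -/
def ppow {K : Type} [NonUnitalRing K] (a : K) : ℕ → K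
  | 0 => a
  | n + 1 => ppow a n * a

/-- Evaluation of an integer polynomial (whose constant term is ignored, hence
meaningful for polynomials with zero constant term) at an element of a non-unital ring. -/
def evalnc {K : Type} [NonUnitalRing K] (p : Polynomial ℤ) (a : K) : K :=
  ∑ i ∈ Finset.range p.natDegree, p.coeff (i + 1) • ppow a i

section Aux

variable {K₁ K₂ : Type} [NonUnitalRing K₁] [NonUnitalRing K₂]

/-- the hom `x ↦ (x, 0)` -/
def inlHom : K₁ →ₙ+* K₁ × K₂ where
  toFun x := (x, 0)
  map_zero' := rfl
  map_add' x y := by ext <;> simp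
  map_mul' x y := by ext <;> simp

@[simp] lemma inlHom_apply (x : K₁) : (inlHom (K₂ := K₂)) x = (x, 0) := rfl

lemma step (h₂ : IsFinSep K₂) (A : NonUnitalSubring (K₁ × K₂)) (a b : K₁ × K₂)
    (hbA : b ∈ A) (hb1 : b.1 = a.1) (F₁ : Type) [NonUnitalRing F₁] [Finite F₁]
    (φ₁ : K₁ →ₙ+* F₁) (hP : ∀ n : K₁, φ₁ n = 0 → (n, a.2 - b.2) ∉ A) :
    ∃ (F : Type) (_ : NonUnitalRing F) (_ : Finite F),
      ∃ φ : (K₁ × K₂) →ₙ+* F, φ a ∉ ⇑φ '' (A : Set (K₁ × K₂)) := by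
  set c := a.2 - b.2 with hc
  set E : NonUnitalSubring K₂ :=
    { carrier := {y | ∃ n, φ₁ n = 0 ∧ (n, y) ∈ A}
      zero_mem' := ⟨0, by simp, by exact A.zero_mem⟩
      add_mem' := by
        rintro y y' ⟨n, hn, hnA⟩ ⟨n', hn', hnA'⟩
        exact ⟨n + n', by simp [hn, hn'], by simpa using A.add_mem hnA hnA'⟩
      mul_mem' := by
        rintro y y' ⟨n, hn, hnA⟩ ⟨n', hn', hnA'⟩
        exact ⟨n * n', by simp [hn], by simpa using A.mul_mem hnA hnA'⟩
      neg_mem' := by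
        rintro y ⟨n, hn, hnA⟩
        exact ⟨-n, by simp [hn], by simpa using A.neg_mem hnA⟩ } with hE
  have hcE : c ∉ E := by
    rintro ⟨n, hn, hnA⟩
    exact hP n hn hnA
  obtain ⟨F₂, _, _, φ₂, hφ₂⟩ := h₂ c E hcE
  refine ⟨F₁ × F₂, inferInstance, inferInstance,
    (φ₁.comp (NonUnitalRingHom.fst K₁ K₂)).prod (φ₂.comp (NonUnitalRingHom.snd K₁ K₂)), ?_⟩
  rintro ⟨x, hxA, hx⟩
  have h1 : φ₁ x.1 = φ₁ a.1 := congrArg Prod.fst hx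
  have h2 : φ₂ x.2 = φ₂ a.2 := congrArg Prod.snd hx
  apply hφ₂
  refine ⟨x.2 - b.2, ⟨x.1 - b.1, ?_, ?_⟩, ?_⟩
  · rw [map_sub, h1, hb1, sub_self]
  · have : x - b ∈ A := A.sub_mem hxA hbA
    exact this
  · rw [map_sub, h2, hc, map_sub]

lemma prodFinSep (h₁ : IsFinSep K₁) (h₂ : IsFinSep K₂) : IsFinSep (K₁ × K₂) := by
  intro a A ha
  by_cases hm : a.1 ∈ A.map (NonUnitalRingHom.fst K₁ K₂)
  · obtain ⟨b, hbA, hb1⟩ := NonUnitalSubring.mem_map.mp hm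
    set c := a.2 - b.2 with hc
    by_cases hw : ∃ w, ((w, c) : K₁ × K₂) ∈ A
    · obtain ⟨w, hwA⟩ := hw
      have hwI : w ∉ A.comap (inlHom (K₂ := K₂)) := by
        intro hwI
        have h0c : ((0, c) : K₁ × K₂) ∈ A := by
          have := A.sub_mem hwA (NonUnitalSubring.mem_comap.mp hwI)
          simpa using this
        have : b + (0, c) ∈ A := A.add_mem hbA h0c
        have hba : b + ((0 : K₁), c) = a := by
          ext
          · simpa using hb1
          · simp [hc]
        rw [hba] at this
        exact ha this
      obtain ⟨F₁, _, _, φ₁, hφ₁⟩ := h₁ w _ hwI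
      refine step h₂ A a b hbA hb1 F₁ φ₁ ?_
      intro n hn hnA
      apply hφ₁
      refine ⟨w - n, NonUnitalSubring.mem_comap.mpr ?_, ?_⟩
      · show ((w - n, (0 : K₂)) : K₁ × K₂) ∈ A
        have := A.sub_mem hwA hnA
        simpa [hc] using this
      · rw [map_sub, hn, sub_zero]
    · refine step h₂ A a b hbA hb1 PUnit 0 ?_
      intro n _ hnA
      exact hw ⟨n, hnA⟩
  · obtain ⟨F₁, _, _, ψ, hψ⟩ := h₁ a.1 _ hm
    refine ⟨F₁, inferInstance, inferInstance, ψ.comp (NonUnitalRingHom.fst K₁ K₂), ?_⟩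
    rintro ⟨x, hxA, hx⟩
    apply hψ
    exact ⟨x.1, NonUnitalSubring.mem_map.mpr ⟨x, hxA, rfl⟩, hx⟩

lemma finsep_of_equiv {L M : Type} [NonUnitalRing L] [NonUnitalRing M]
    (e : L ≃+* M) (h : IsFinSep M) : IsFinSep L := by
  intro a A ha
  have hea : e a ∉ A.map (e : L →ₙ+* M) := by
    rintro ⟨x, hxA, hx⟩
    have : x = a := e.injective hx
    exact ha (this ▸ hxA)
  obtain ⟨F, _, _, φ, hφ⟩ := h (e a) _ hea
  refine ⟨F, inferInstance, inferInstance, φ.comp (e : L →ₙ+* M), ?_⟩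
  rintro ⟨x, hxA, hx⟩
  exact hφ ⟨e x, ⟨x, hxA, rfl⟩, hx⟩

end Aux

lemma finsep_pi_fin : ∀ (n : ℕ) (K : Fin n → Type) (_ : ∀ i, NonUnitalRing (K i)),
    (∀ i, IsFinSep (K i)) → IsFinSep (∀ i, K i) := by
  intro n
  induction n with
  | zero =>
    intro K _ _ a A ha
    exact absurd (by rw [Subsingleton.elim a 0]; exact A.zero_mem) ha
  | succ n ih =>
    intro K _ h
    have e : (∀ i, K i) ≃+* (K 0 × ∀ i : Fin n, K i.succ) :=
      { toFun := fun f => (f 0, fun i => f i.succ)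
        invFun := fun p => Fin.cons p.1 p.2
        left_inv := fun f => by
          funext i
          exact Fin.cases rfl (fun j => rfl) i
        right_inv := fun p => rfl
        map_add' := fun f g => rfl
        map_mul' := fun f g => rfl }
    exact finsep_of_equiv e (prodFinSep (h 0) (ih _ _ fun i => h i.succ))

/-- Mal'cev: the direct product of finitely many finitely separable rings is
finitely separable. -/
theorem stmt4 (ι : Type) [Finite ι] (K : ι → Type) [∀ i, NonUnitalRing (K i)]
    (h : ∀ i, IsFinSep (K i)) : IsFinSep (∀ i, K i) := by
  have ⟨n, ⟨e⟩⟩ := Finite.exists_equiv_fin ι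
  have E : (∀ i, K i) ≃+* (∀ j : Fin n, K (e.symm j)) :=
    { Equiv.piCongrLeft' K e with
      map_add' := fun f g => rfl
      map_mul' := fun f g => rfl }
  exact finsep_of_equiv E (finsep_pi_fin n _ _ fun j => h (e.symm j))
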